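/- arXiv:0910.4709 — 3 statements merged into one kernel-verified Lean document; each statement's English description precedes it below -/
import Mathlib

section
/- Let c_1,...,c_r be positive integers, each greater than 1, and let m = c_1 + ... + c_r. Then the sets {c_1, c_1+c_2, ..., c_1+...+c_r} and {1+c_1, 1+c_1+c_2, ..., 1+c_1+...+c_r} are disjoint modulo m. -/
/-- If `c 0, …, c (r-1)` are all `≥ 2` and `m` is their sum, then the partial sums
`S h = c 0 + ⋯ + c (h-1)` (for `1 ≤ h ≤ r`) and the shifted partial sums `1 + S k`
are disjoint modulo `m`. -/
theorem stmt1 (r m : ℕ) (c : ℕ → ℕ) (hr : 0 < r)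
    (hc : ∀ i < r, 2 ≤ c i) (hm : m = ∑ i ∈ Finset.range r, c i) :
    ∀ h k, 1 ≤ h → h ≤ r → 1 ≤ k → k ≤ r →
      ((∑ i ∈ Finset.range h, c i : ℕ) : ZMod m) ≠
        1 + ((∑ i ∈ Finset.range k, c i : ℕ) : ZMod m) := by
  intro h k h1 hhr k1 hkr heq
  set Sh := ∑ i ∈ Finset.range h, c i with hSh
  set Sk := ∑ i ∈ Finset.range k, c i with hSk
  have hle : ∀ a b : ℕ, a ≤ b →
      (∑ i ∈ Finset.range a, c i) ≤ ∑ i ∈ Finset.range b, c i := by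
    intro a b hab
    exact Finset.sum_le_sum_of_subset (Finset.range_subset_range.2 hab)
  have hc0 : 2 ≤ c 0 := hc 0 hr
  have h2h : 2 ≤ Sh := by
    have := hle 1 h h1
    simp [Finset.sum_range_one] at this
    omega
  have h2k : 2 ≤ Sk := by
    have := hle 1 k k1
    simp [Finset.sum_range_one] at this
    omega
  have hhm : Sh ≤ m := hm ▸ hle h r hhr
  have hkm : Sk ≤ m := hm ▸ hle k r hkr
  -- Sh ≠ 1 + Sk as naturals
  have hne : Sh ≠ 1 + Sk := by
    intro he
    have hkh : k < h := by
      by_contra hco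
      have := hle h k (by omega)
      omega
    have : Sk + c k ≤ Sh := by
      have := hle (k + 1) h hkh
      rw [Finset.sum_range_succ] at this
      omega
    have := hc k (by omega)
    omega
  -- From heq, m ∣ (1 + Sk) - Sh in ℤ
  have heq' : (Sh : ZMod m) = ((1 + Sk : ℕ) : ZMod m) := by push_cast; exact heq
  have hmod : Sh ≡ 1 + Sk [MOD m] := (ZMod.natCast_eq_natCast_iff _ _ _).1 heq'
  have hdvd : (m : ℤ) ∣ (1 + Sk : ℤ) - Sh := hmod.dvd
  have : ((1 + Sk : ℤ) - Sh) = 0 := by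
    refine Int.eq_zero_of_abs_lt_dvd hdvd ?_
    rw [abs_lt]
    constructor <;> omega
  omega
end

section
/- Let c_1,...,c_r be positive integers with m = c_1 + ... + c_r, and suppose c_1 ≥ 1 + m/2. Then the sets A = {∑_{i=1}^h c_i : 1 ≤ h ≤ r} and B = {(m + 1 - c_1) + ∑_{i=1}^k c_i : 1 ≤ k ≤ r} are disjoint modulo m. -/
/-- If `c 0, …, c (r-1)` are positive with sum `m` and `c 0 ≥ 1 + m/2`
(i.e. `2 * c 0 ≥ m + 2`), then the partial sums `S h` (for `1 ≤ h ≤ r`) and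
the translates `(m + 1 - c 0) + S k` are disjoint modulo `m`. -/
theorem stmt2 (r m : ℕ) (c : ℕ → ℕ) (hr : 0 < r)
    (hc : ∀ i < r, 1 ≤ c i) (hm : m = ∑ i ∈ Finset.range r, c i)
    (h1 : m + 2 ≤ 2 * c 0) :
    ∀ h k, 1 ≤ h → h ≤ r → 1 ≤ k → k ≤ r →
      ((∑ i ∈ Finset.range h, c i : ℕ) : ZMod m) ≠
        ((m + 1 - c 0 + ∑ i ∈ Finset.range k, c i : ℕ) : ZMod m) := by
  intro h k h1h hhr h1k hkr heq
  have hS0h : c 0 ≤ ∑ i ∈ Finset.range h, c i :=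
    Finset.single_le_sum (fun i _ => Nat.zero_le _) (Finset.mem_range.mpr h1h)
  have hS0k : c 0 ≤ ∑ i ∈ Finset.range k, c i :=
    Finset.single_le_sum (fun i _ => Nat.zero_le _) (Finset.mem_range.mpr h1k)
  have hShm : ∑ i ∈ Finset.range h, c i ≤ m :=
    hm ▸ Finset.sum_le_sum_of_subset (Finset.range_subset_range.mpr hhr)
  have hSkm : ∑ i ∈ Finset.range k, c i ≤ m :=
    hm ▸ Finset.sum_le_sum_of_subset (Finset.range_subset_range.mpr hkr)
  have hc0m : c 0 ≤ m := le_trans hS0h hShm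
  set a := ∑ i ∈ Finset.range h, c i with ha
  set b := ∑ i ∈ Finset.range k, c i with hb
  obtain ⟨d, hd⟩ : ∃ d, m + 1 - c 0 = d ∧ c 0 + d = m + 1 := ⟨m + 1 - c 0, rfl, by omega⟩
  rw [hd.1] at heq
  rw [ZMod.natCast_eq_natCast_iff] at heq
  have hd2 := hd.2
  have hdvd := heq.dvd
  push_cast at hdvd
  have h0 : (0:ℤ) < (d : ℤ) + b - a := by omega
  have hlt : (d : ℤ) + b - a < m := by omega
  have := Int.le_of_dvd h0 hdvd
  omega
end

section
/- For positive integers c_1,...,c_r all ≥ 2 with m = ∑ c_i, and any consecutive block sum T = c_{k+1} + ... + c_h (with k < h ≤ r, nonempty), T is not congruent to 1 or -1 modulo m. -/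
/-- For positive integers `c 0, …, c (r-1)` all `≥ 2` with sum `m`, any nonempty
consecutive block sum `c k + c (k+1) + ⋯ + c (h-1)` (with `k < h ≤ r`) is not
congruent to `1` or `-1` modulo `m`. -/
theorem stmt3 (r m : ℕ) (c : ℕ → ℕ) (hc : ∀ i < r, 2 ≤ c i)
    (hm : m = ∑ i ∈ Finset.range r, c i) :
    ∀ k h, k < h → h ≤ r →
      ((∑ i ∈ Finset.Ico k h, c i : ℕ) : ZMod m) ≠ 1 ∧
      ((∑ i ∈ Finset.Ico k h, c i : ℕ) : ZMod m) ≠ -1 := by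
  intro k h hk hh
  set T := ∑ i ∈ Finset.Ico k h, c i with hT
  set A := ∑ i ∈ Finset.Ico 0 k, c i with hA
  set B := ∑ i ∈ Finset.Ico h r, c i with hB
  have hkr : k < r := lt_of_lt_of_le hk hh
  have hT2 : 2 ≤ T :=
    le_trans (hc k hkr) (Finset.single_le_sum (f := c) (fun i _ => Nat.zero_le _)
      (Finset.mem_Ico.mpr ⟨le_refl k, hk⟩))
  have h2 : T + B = ∑ i ∈ Finset.Ico k r, c i := Finset.sum_Ico_consecutive c hk.le hh
  have h1 : A + (T + B) = ∑ i ∈ Finset.Ico 0 r, c i := by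
    rw [h2]; exact Finset.sum_Ico_consecutive c (Nat.zero_le k) hkr.le
  have hsum : m = A + T + B := by
    rw [hm, Finset.range_eq_Ico, ← h1]; ring
  have hAalt : A = 0 ∨ 2 ≤ A := by
    rcases Nat.eq_zero_or_pos k with hk0 | hk0
    · left; simp [hA, hk0]
    · right
      exact le_trans (hc 0 (lt_of_lt_of_le hk0 hkr.le))
        (Finset.single_le_sum (f := c) (fun i _ => Nat.zero_le _)
          (Finset.mem_Ico.mpr ⟨le_refl 0, hk0⟩))
  have hBalt : B = 0 ∨ 2 ≤ B := by
    rcases eq_or_lt_of_le hh with hhr | hhr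
    · left; simp [hB, hhr]
    · right
      exact le_trans (hc h hhr)
        (Finset.single_le_sum (f := c) (fun i _ => Nat.zero_le _)
          (Finset.mem_Ico.mpr ⟨le_refl h, hhr⟩))
  have hm2 : 2 ≤ m := by omega
  haveI : NeZero m := ⟨by omega⟩
  constructor
  · intro heq
    have hz : ((T - 1 : ℕ) : ZMod m) = 0 := by
      rw [Nat.cast_sub (by omega : 1 ≤ T), heq]; simp
    have hd : m ∣ (T - 1) := (ZMod.natCast_eq_zero_iff _ _).mp hz
    have := Nat.le_of_dvd (by omega) hd
    omega
  · intro heq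
    have hz : ((T + 1 : ℕ) : ZMod m) = 0 := by
      push_cast; rw [heq]; ring
    have hd : m ∣ (T + 1) := (ZMod.natCast_eq_zero_iff _ _).mp hz
    rcases hd with ⟨q, hq⟩
    have hq1 : q = 1 := by nlinarith
    subst hq1
    omega
end
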